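/- Binomial tail lower bound: for 0 < q < p < 1 and k = ⌊qN⌋ with 1 ≤ k ≤ N-1, B(p,k,N) = Σ_{m=0}^{k} C(N,m) p^m (1-p)^{N-m} ≥ (8N·(k/N)(1-k/N))^{-1/2} e^{-N D(k/N ‖ p)}. -/

import Mathlib

/-- Lower tail of a Binomial(N, p) distribution: `B(p,k,N) = Σ_{m=0}^k C(N,m) p^m (1-p)^{N-m}`. -/
noncomputable def binTail (p : ℝ) (k N : ℕ) : ℝ :=
  ∑ m ∈ Finset.range (k + 1), (N.choose m : ℝ) * p ^ m * (1 - p) ^ (N - m)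

/-- Binary relative entropy (natural log): `D(q‖p) = q log(q/p) + (1-q) log((1-q)/(1-p))`. -/
noncomputable def relent (q p : ℝ) : ℝ :=
  q * Real.log (q / p) + (1 - q) * Real.log ((1 - q) / (1 - p))



section BinTailAux
open Real Stirling

lemma sqrt_pi_le_SS (n : ℕ) : √π ≤ stirlingSeq (n+1) := by
  have h1 : Filter.Tendsto (fun m : ℕ => stirlingSeq (m + (n + 1))) Filter.atTop (nhds (√π)) :=
    tendsto_stirlingSeq_sqrt_pi.comp (Filter.tendsto_add_atTop_nat (n+1))
  refine le_of_tendsto h1 (Filter.Eventually.of_forall fun m => ?_)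
  have := stirlingSeq'_antitone (Nat.le_add_left n m)
  simpa [Function.comp, Nat.succ_eq_add_one, add_assoc, add_comm, add_left_comm] using this

lemma SS_pos {n : ℕ} (hn : 1 ≤ n) : 0 < stirlingSeq n := by
  obtain ⟨m, rfl⟩ := Nat.exists_eq_add_of_le hn
  simpa [add_comm] using stirlingSeq'_pos m

lemma SS_telescope (b : ℕ) (hb : 1 ≤ b) (j : ℕ) :
    Real.log (stirlingSeq b) - Real.log (stirlingSeq (b + j)) ≤ j / (4 * (b:ℝ)^2) := by
  induction j with
  | zero => simp
  | succ j ih =>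
    have key : Real.log (stirlingSeq (b + j)) - Real.log (stirlingSeq (b + j + 1)) ≤
        1 / (4 * (b:ℝ)^2) := by
      obtain ⟨m, rfl⟩ := Nat.exists_eq_add_of_le hb
      have h := log_stirlingSeq_sub_log_stirlingSeq_succ (m + j + 1)
      have h2 : (1:ℝ) / (4 * (↑(m + j + 1) : ℝ)^2) ≤ 1 / (4 * ((1:ℝ)+m)^2) := by
        apply one_div_le_one_div_of_le (by positivity)
        have : ((1:ℝ)+m) ≤ (↑(m + j + 1) : ℝ) := by push_cast; linarith [Nat.cast_nonneg (α := ℝ) j]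
        nlinarith [Nat.cast_nonneg (α := ℝ) m, Nat.cast_nonneg (α := ℝ) j]
      calc Real.log (stirlingSeq (1 + m + j)) - Real.log (stirlingSeq (1 + m + j + 1))
          = Real.log (stirlingSeq (m + j + 1)) - Real.log (stirlingSeq (m + j + 2)) := by
            ring_nf
        _ ≤ 1 / (4 * (↑(m + j + 1) : ℝ)^2) := h
        _ ≤ 1 / (4 * ((1:ℝ)+m)^2) := h2
        _ = 1 / (4 * ((1+m : ℕ):ℝ)^2) := by push_cast; ring
    have : (↑(j+1) : ℝ) / (4 * (b:ℝ)^2) = j / (4 * (b:ℝ)^2) + 1 / (4*(b:ℝ)^2) := by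
      push_cast; ring
    rw [this, show b + (j+1) = b + j + 1 from rfl]
    linarith

lemma SS_two : stirlingSeq 2 = Real.exp 1 ^ 2 / 4 := by
  rw [stirlingSeq]
  have : √(2 * (2:ℕ) : ℝ) = 2 := by
    rw [show (2 * (2:ℕ) : ℝ) = 2^2 by norm_num, Real.sqrt_sq]; norm_num
  rw [this]
  have he := Real.exp_pos 1
  field_simp [Nat.factorial]
  ring


lemma exp_le_one_sub_inv {x : ℝ} (h0 : 0 ≤ x) (h1 : x < 1) : Real.exp x ≤ (1 - x)⁻¹ := by
  have h2 : 1 - x ≤ Real.exp (-x) := by have := Real.add_one_le_exp (-x); linarith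
  have h3 : 0 < 1 - x := by linarith
  rw [Real.exp_neg] at h2
  rw [← inv_inv (Real.exp x)]
  exact inv_anti₀ (by positivity) h2

lemma SS_le_mul (a b : ℕ) (hb : 1 ≤ b) :
    stirlingSeq b ≤ stirlingSeq (b + a) * Real.exp (a / (4 * (b:ℝ)^2)) := by
  have h := SS_telescope b hb a
  have hp1 : 0 < stirlingSeq b := SS_pos hb
  have hp2 : 0 < stirlingSeq (b + a) := SS_pos (by omega)
  calc stirlingSeq b = Real.exp (Real.log (stirlingSeq b)) := (Real.exp_log hp1).symm
    _ ≤ Real.exp (Real.log (stirlingSeq (b + a)) + a / (4 * (b:ℝ)^2)) := by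
        apply Real.exp_le_exp.2; linarith
    _ = stirlingSeq (b + a) * Real.exp (a / (4 * (b:ℝ)^2)) := by
        rw [Real.exp_add, Real.exp_log hp2]


lemma M' (a b : ℕ) (ha : 1 ≤ a) (hab : a ≤ b) (hb : 6 ≤ b) :
    stirlingSeq a * stirlingSeq b ≤ 2 * stirlingSeq (a + b) := by
  have hE := Real.exp_one_lt_d9
  have hEpos := Real.exp_pos 1
  have hSSab : 0 < stirlingSeq (a + b) := SS_pos (by omega)
  have hSSb : 0 < stirlingSeq b := SS_pos (by omega)
  have hkey : stirlingSeq b ≤ stirlingSeq (a + b) * Real.exp (a / (4 * (b:ℝ)^2)) := by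
    have := SS_le_mul a b (by omega)
    rwa [Nat.add_comm b a] at this
  have hbR : (6:ℝ) ≤ (b:ℝ) := by exact_mod_cast hb
  have hxpos : (0:ℝ) ≤ (a:ℝ) / (4 * (b:ℝ)^2) := by positivity
  rcases Nat.lt_or_ge a 2 with h2 | h2
  · -- a = 1
    interval_cases a
    have hexp : Real.exp ((1:ℕ) / (4 * (b:ℝ)^2)) ≤ (1 - (1:ℝ)/144)⁻¹ := by
      refine le_trans (Real.exp_le_exp.2 ?_) (exp_le_one_sub_inv (by norm_num) (by norm_num))
      push_cast
      apply div_le_div_of_nonneg_left (by norm_num) (by norm_num)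
      nlinarith
    have hs2 : (1.414:ℝ) ≤ √2 := (Real.le_sqrt (by norm_num) (by norm_num)).2 (by norm_num)
    have hs2pos : (0:ℝ) < √2 := by linarith
    have hone : stirlingSeq 1 * Real.exp ((1:ℕ) / (4 * (b:ℝ)^2)) ≤ 2 := by
      rw [stirlingSeq_one]
      calc Real.exp 1 / √2 * Real.exp ((1:ℕ) / (4 * (b:ℝ)^2))
          ≤ Real.exp 1 / √2 * (1 - (1:ℝ)/144)⁻¹ := by
            apply mul_le_mul_of_nonneg_left hexp (by positivity)
        _ ≤ 2 := by
            rw [div_mul_eq_mul_div, div_le_iff₀ hs2pos]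
            nlinarith
    calc stirlingSeq 1 * stirlingSeq b
        ≤ stirlingSeq 1 * (stirlingSeq (1 + b) * Real.exp ((1:ℕ) / (4 * (b:ℝ)^2))) :=
          mul_le_mul_of_nonneg_left hkey (le_of_lt (SS_pos le_rfl))
      _ = stirlingSeq 1 * Real.exp ((1:ℕ) / (4 * (b:ℝ)^2)) * stirlingSeq (1 + b) := by ring
      _ ≤ 2 * stirlingSeq (1 + b) := mul_le_mul_of_nonneg_right hone (le_of_lt hSSab)
  · -- a ≥ 2
    have hSa : stirlingSeq a ≤ stirlingSeq 2 := by
      obtain ⟨m, rfl⟩ := Nat.exists_eq_add_of_le h2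
      have := stirlingSeq'_antitone (show 1 ≤ 1 + m by omega)
      simpa [Function.comp, Nat.succ_eq_add_one, add_comm, add_left_comm] using this
    have hexp : Real.exp ((a:ℝ) / (4 * (b:ℝ)^2)) ≤ (1 - (1:ℝ)/24)⁻¹ := by
      refine le_trans (Real.exp_le_exp.2 ?_) (exp_le_one_sub_inv (by norm_num) (by norm_num))
      have hab' : (a:ℝ) ≤ (b:ℝ) := by exact_mod_cast hab
      rw [div_le_iff₀ (by positivity)]
      nlinarith
    have htwo : stirlingSeq 2 * Real.exp ((a:ℝ) / (4 * (b:ℝ)^2)) ≤ 2 := by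
      rw [SS_two]
      calc Real.exp 1 ^ 2 / 4 * Real.exp ((a:ℝ) / (4 * (b:ℝ)^2))
          ≤ Real.exp 1 ^ 2 / 4 * (1 - (1:ℝ)/24)⁻¹ := by
            apply mul_le_mul_of_nonneg_left hexp (by positivity)
        _ ≤ 2 := by nlinarith
    calc stirlingSeq a * stirlingSeq b
        ≤ stirlingSeq 2 * (stirlingSeq (a + b) * Real.exp ((a:ℝ) / (4 * (b:ℝ)^2))) := by
          apply mul_le_mul hSa hkey (le_of_lt hSSb) (le_of_lt (SS_pos (by norm_num)))
      _ = stirlingSeq 2 * Real.exp ((a:ℝ) / (4 * (b:ℝ)^2)) * stirlingSeq (a + b) := by ring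
      _ ≤ 2 * stirlingSeq (a + b) := mul_le_mul_of_nonneg_right htwo (le_of_lt hSSab)


lemma nat_ineq_of_SS (a b : ℕ) (ha : 1 ≤ a) (hb : 1 ≤ b)
    (h : stirlingSeq a * stirlingSeq b ≤ 2 * stirlingSeq (a + b)) :
    ((a:ℝ)+b)^(2*(a+b)+1) ≤ 8 * ((a+b).choose a : ℝ)^2 * (a:ℝ)^(2*a+1) * (b:ℝ)^(2*b+1) := by
  set A : ℝ := (a:ℝ) with hA
  set B : ℝ := (b:ℝ) with hB
  have pA : (0:ℝ) < A := by rw [hA]; exact Nat.cast_pos.mpr (by omega)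
  have pB : (0:ℝ) < B := by rw [hB]; exact Nat.cast_pos.mpr (by omega)
  set E : ℝ := Real.exp 1 with hE
  have pE : (0:ℝ) < E := Real.exp_pos 1
  set n : ℕ := a + b with hn
  have hNn : ((n:ℕ):ℝ) = A + B := by push_cast [hn]; ring
  set fa : ℝ := (a.factorial : ℝ) with hfa
  set fb : ℝ := (b.factorial : ℝ) with hfb
  set fn : ℝ := (n.factorial : ℝ) with hfn
  have pfa : (0:ℝ) < fa := by rw [hfa]; exact Nat.cast_pos.mpr a.factorial_pos
  have pfb : (0:ℝ) < fb := by rw [hfb]; exact Nat.cast_pos.mpr b.factorial_pos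
  have pfn : (0:ℝ) < fn := by rw [hfn]; exact Nat.cast_pos.mpr n.factorial_pos
  set C : ℝ := (n.choose a : ℝ) with hC
  have pC : (0:ℝ) < C := by
    rw [hC]; exact Nat.cast_pos.mpr (Nat.choose_pos (by omega))
  have hfnC : fn = C * fa * fb := by
    rw [hfn, hC, hfa, hfb]
    rw [← Nat.choose_mul_factorial_mul_factorial (show a ≤ n by omega)]
    push_cast [show n - a = b by omega]
    ring
  -- unfold stirlingSeq in h
  have hssa : stirlingSeq a = fa / (√(2*A) * (A/E)^a) := by rw [stirlingSeq]
  have hssb : stirlingSeq b = fb / (√(2*B) * (B/E)^b) := by rw [stirlingSeq]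
  have hssn : stirlingSeq n = fn / (√(2*(A+B)) * ((A+B)/E)^n) := by
    rw [stirlingSeq, ← hNn]
  rw [hssa, hssb, hssn] at h
  have sA : (0:ℝ) < √(2*A) := Real.sqrt_pos.2 (by linarith)
  have sB : (0:ℝ) < √(2*B) := Real.sqrt_pos.2 (by linarith)
  have sN : (0:ℝ) < √(2*(A+B)) := Real.sqrt_pos.2 (by linarith)
  have pPA : (0:ℝ) < (A/E)^a := by positivity
  have pPB : (0:ℝ) < (B/E)^b := by positivity
  have pPN : (0:ℝ) < ((A+B)/E)^n := by positivity
  rw [div_mul_div_comm, mul_div_assoc', div_le_div_iff₀ (by positivity) (by positivity)] at h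
  -- square
  have hsq := mul_self_le_mul_self (by positivity) h
  have e1 : fa * fb * (√(2*(A+B)) * ((A+B)/E)^n) * (fa * fb * (√(2*(A+B)) * ((A+B)/E)^n))
      = fa^2*fb^2*(2*(A+B))*((A+B)^(2*n)/E^(2*n)) := by
    have h1 : √(2*(A+B)) * √(2*(A+B)) = 2*(A+B) := Real.mul_self_sqrt (by linarith)
    have h2 : ((A+B)/E)^n * ((A+B)/E)^n = (A+B)^(2*n)/E^(2*n) := by
      rw [← pow_add, ← div_pow]; ring_nf
    calc fa * fb * (√(2*(A+B)) * ((A+B)/E)^n) * (fa * fb * (√(2*(A+B)) * ((A+B)/E)^n))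
        = fa^2*fb^2*(√(2*(A+B)) * √(2*(A+B)))*(((A+B)/E)^n * ((A+B)/E)^n) := by ring
      _ = _ := by rw [h1, h2]
  have e2 : 2 * fn * (√(2*A) * (A/E)^a * (√(2*B) * (B/E)^b)) *
        (2 * fn * (√(2*A) * (A/E)^a * (√(2*B) * (B/E)^b)))
      = 4*fn^2*(2*A)*(2*B)*((A^(2*a)/E^(2*a))*(B^(2*b)/E^(2*b))) := by
    have h1 : √(2*A) * √(2*A) = 2*A := Real.mul_self_sqrt (by linarith)
    have h2 : √(2*B) * √(2*B) = 2*B := Real.mul_self_sqrt (by linarith)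
    have h3 : (A/E)^a * (A/E)^a = A^(2*a)/E^(2*a) := by rw [← pow_add, ← div_pow]; ring_nf
    have h4 : (B/E)^b * (B/E)^b = B^(2*b)/E^(2*b) := by rw [← pow_add, ← div_pow]; ring_nf
    calc 2 * fn * (√(2*A) * (A/E)^a * (√(2*B) * (B/E)^b)) *
        (2 * fn * (√(2*A) * (A/E)^a * (√(2*B) * (B/E)^b)))
        = 4*fn^2*(√(2*A)*√(2*A))*(√(2*B)*√(2*B))*(((A/E)^a*(A/E)^a)*((B/E)^b*(B/E)^b)) := by
          ring
      _ = _ := by rw [h1, h2, h3, h4]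
  rw [e1, e2] at hsq
  -- clear the E powers
  have hEn : E^(2*n) = E^(2*a) * E^(2*b) := by rw [← pow_add]; congr 1; omega
  have pEa : (0:ℝ) < E^(2*a) := by positivity
  have pEb : (0:ℝ) < E^(2*b) := by positivity
  have pEn : (0:ℝ) < E^(2*n) := by positivity
  have hsq2 : fa^2*fb^2*(2*(A+B))*(A+B)^(2*n) ≤ 4*fn^2*(2*A)*(2*B)*(A^(2*a)*B^(2*b)) := by
    have := mul_le_mul_of_nonneg_right hsq (le_of_lt pEn)
    calc fa^2*fb^2*(2*(A+B))*(A+B)^(2*n)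
        = fa^2*fb^2*(2*(A+B))*((A+B)^(2*n)/E^(2*n)) * E^(2*n) := by
          field_simp
      _ ≤ 4*fn^2*(2*A)*(2*B)*((A^(2*a)/E^(2*a))*(B^(2*b)/E^(2*b))) * E^(2*n) := this
      _ = 4*fn^2*(2*A)*(2*B)*(A^(2*a)*B^(2*b)) := by
          rw [hEn]; field_simp
  -- substitute fn and cancel fa, fb
  rw [hfnC] at hsq2
  have goal2 : (A+B)^(2*n+1) ≤ 8 * C^2 * A^(2*a+1) * B^(2*b+1) := by
    have hpos : (0:ℝ) < fa^2 * fb^2 * 2 := by positivity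
    rw [← mul_le_mul_iff_right₀ hpos]
    calc fa^2*fb^2*2*(A+B)^(2*n+1) = fa^2*fb^2*(2*(A+B))*(A+B)^(2*n) := by ring
      _ ≤ 4*(C*fa*fb)^2*(2*A)*(2*B)*(A^(2*a)*B^(2*b)) := hsq2
      _ = fa^2*fb^2*2*(8 * C^2 * A^(2*a+1) * B^(2*b+1)) := by ring
  exact goal2


lemma core_aux (a b : ℕ) (ha : 1 ≤ a) (hab : a ≤ b) (hb : 1 ≤ b) :
    ((a:ℝ)+b)^(2*(a+b)+1) ≤ 8 * ((a+b).choose a : ℝ)^2 * (a:ℝ)^(2*a+1) * (b:ℝ)^(2*b+1) := by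
  rcases le_or_gt 6 b with h6 | h6
  · exact nat_ineq_of_SS a b ha hb (M' a b ha hab h6)
  · interval_cases b <;> interval_cases a <;> norm_num [Nat.choose]

lemma core (a b : ℕ) (ha : 1 ≤ a) (hb : 1 ≤ b) :
    ((a:ℝ)+b)^(2*(a+b)+1) ≤ 8 * ((a+b).choose a : ℝ)^2 * (a:ℝ)^(2*a+1) * (b:ℝ)^(2*b+1) := by
  rcases le_total a b with hab | hab
  · exact core_aux a b ha hab hb
  · have h := core_aux b a hb hab ha
    have hc : (b+a).choose b = (a+b).choose a := by
      rw [Nat.add_comm b a]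
      have h2 := Nat.choose_symm (show b ≤ a+b by omega)
      rw [Nat.add_sub_cancel] at h2
      exact h2.symm
    rw [hc, Nat.add_comm b a] at h
    calc ((a:ℝ)+b)^(2*(a+b)+1) = ((b:ℝ)+a)^(2*(a+b)+1) := by ring_nf
      _ ≤ 8 * ((a+b).choose a : ℝ)^2 * (b:ℝ)^(2*b+1) * (a:ℝ)^(2*a+1) := h
      _ = 8 * ((a+b).choose a : ℝ)^2 * (a:ℝ)^(2*a+1) * (b:ℝ)^(2*b+1) := by ring





end BinTailAux

open Real in
theorem binTail_lower_bound (p q : ℝ) (k N : ℕ)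
    (hq : 0 < q) (hqp : q < p) (hp : p < 1)
    (hk : k = Nat.floor (q * N)) (hk1 : 1 ≤ k) (hkN : k ≤ N - 1) :
    binTail p k N ≥
      (Real.sqrt (8 * (N : ℝ) * ((k : ℝ) / N) * (1 - (k : ℝ) / N)))⁻¹ *
        Real.exp (-(N : ℝ) * relent ((k : ℝ) / N) p) := by
  have hN0 : 0 < N := by
    rcases Nat.eq_zero_or_pos N with h | h
    · subst h; simp at hkN; omega
    · exact h
  have hkltN : k < N := by omega
  set b : ℕ := N - k with hbdef
  have hb1 : 1 ≤ b := by omega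
  have hkb : k + b = N := by omega
  have hp0 : 0 < p := lt_trans hq hqp
  have h1p : 0 < 1 - p := by linarith
  have hNR : (0:ℝ) < (N:ℝ) := by exact_mod_cast hN0
  have hkR : (0:ℝ) < (k:ℝ) := by exact_mod_cast hk1
  have hbR : (0:ℝ) < (b:ℝ) := by exact_mod_cast hb1
  have hcast : (b:ℝ) = (N:ℝ) - (k:ℝ) := by
    rw [hbdef]; push_cast [Nat.cast_sub (le_of_lt hkltN)]; ring
  set Q : ℝ := (k:ℝ)/N with hQ
  have hQ0 : 0 < Q := by positivity
  have h1Q : 1 - Q = (b:ℝ)/N := by rw [hQ, hcast]; field_simp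
  have h1Q0 : 0 < 1 - Q := by rw [h1Q]; positivity
  have hQne : Q ≠ 0 := ne_of_gt hQ0
  have h1Qne : 1 - Q ≠ 0 := ne_of_gt h1Q0
  set C : ℝ := (N.choose k : ℝ) with hC
  have hC0 : (0:ℝ) < C := by
    rw [hC]; exact_mod_cast Nat.choose_pos (le_of_lt hkltN)
  -- Step A : single term lower bound
  have stepA : (C * p^k * (1-p)^b) ≤ binTail p k N := by
    rw [binTail]
    have := Finset.single_le_sum
      (f := fun m => (N.choose m : ℝ) * p ^ m * (1 - p) ^ (N - m))
      (fun i _ => by positivity) (Finset.self_mem_range_succ k)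
    simpa [hC, hbdef] using this
  -- Step B : exponential identity
  have hNQ : (N:ℝ) * Q = k := by rw [hQ]; field_simp
  have hN1Q : (N:ℝ) * (1 - Q) = b := by rw [h1Q]; field_simp
  have he : Real.exp (-(N:ℝ) * relent Q p) = (p/Q)^k * ((1-p)/(1-Q))^b := by
    have harg : -(N:ℝ) * relent Q p
        = k * Real.log (p/Q) + b * Real.log ((1-p)/(1-Q)) := by
      rw [relent]
      rw [Real.log_div (ne_of_gt hQ0) (ne_of_gt hp0),
          Real.log_div h1Qne (ne_of_gt h1p),
          Real.log_div (ne_of_gt hp0) (ne_of_gt hQ0),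
          Real.log_div (ne_of_gt h1p) h1Qne]
      have e1 : -(N:ℝ) * (Q * (Real.log Q - Real.log p) + (1-Q) * (Real.log (1-Q) - Real.log (1-p)))
          = ((N:ℝ)*Q) * (Real.log p - Real.log Q) + ((N:ℝ)*(1-Q)) * (Real.log (1-p) - Real.log (1-Q)) := by
        ring
      rw [e1, hNQ, hN1Q]
    rw [harg, Real.exp_add]
    rw [← Real.exp_log (show (0:ℝ) < p/Q by positivity),
        ← Real.exp_log (show (0:ℝ) < (1-p)/(1-Q) by positivity),
        ← Real.exp_nat_mul, ← Real.exp_nat_mul]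
    simp [Real.exp_log, Real.log_exp]
  have stepB : C * p^k * (1-p)^b = (C * Q^k * (1-Q)^b) * Real.exp (-(N:ℝ) * relent Q p) := by
    rw [he]
    have e1 : Q^k * (p/Q)^k = p^k := by rw [← mul_pow, mul_div_cancel₀ _ hQne]
    have e2 : (1-Q)^b * ((1-p)/(1-Q))^b = (1-p)^b := by
      rw [← mul_pow, mul_div_cancel₀ _ h1Qne]
    calc C * p^k * (1-p)^b = C * (Q^k * (p/Q)^k) * ((1-Q)^b * ((1-p)/(1-Q))^b) := by
          rw [e1, e2]
      _ = C * Q^k * (1-Q)^b * ((p/Q)^k * ((1-p)/(1-Q))^b) := by ring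
  -- Step C : sqrt bound
  set X : ℝ := 8 * (N:ℝ) * Q * (1 - Q) with hX
  have hX0 : 0 < X := by rw [hX]; positivity
  set G : ℝ := C * Q^k * (1-Q)^b with hG
  have hG0 : 0 < G := by rw [hG]; positivity
  have hcoreN : (N:ℝ)^(2*N+1) ≤ 8 * C^2 * (k:ℝ)^(2*k+1) * (b:ℝ)^(2*b+1) := by
    have h := core k b hk1 hb1
    rw [hkb] at h
    have : (k:ℝ) + b = N := by rw [hcast]; ring
    rwa [this, ← hC] at h
  have hkey : 1 ≤ X * G^2 := by
    have hXG : X * G^2 = (8 * C^2 * (k:ℝ)^(2*k+1) * (b:ℝ)^(2*b+1)) / (N:ℝ)^(2*N+1) := by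
      rw [hX, hG, hQ, h1Q]
      rw [div_pow, div_pow]
      field_simp
      ring_nf
      rw [← hkb]
      ring_nf
    rw [hXG, le_div_iff₀ (by positivity), one_mul]
    exact hcoreN
  have hsX : 0 < Real.sqrt X := Real.sqrt_pos.2 hX0
  have stepC : (Real.sqrt X)⁻¹ ≤ G := by
    have h1 : Real.sqrt X * G = Real.sqrt (X * G^2) := by
      rw [Real.sqrt_mul (le_of_lt hX0), Real.sqrt_sq (le_of_lt hG0)]
    have h2 : 1 ≤ Real.sqrt X * G := by
      rw [h1]
      calc (1:ℝ) = Real.sqrt 1 := Real.sqrt_one.symm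
        _ ≤ Real.sqrt (X * G^2) := Real.sqrt_le_sqrt hkey
    rw [inv_eq_one_div, div_le_iff₀ hsX]
    linarith [h2]
  -- combine
  have hexp : 0 < Real.exp (-(N:ℝ) * relent Q p) := Real.exp_pos _
  calc (Real.sqrt X)⁻¹ * Real.exp (-(N:ℝ) * relent Q p)
      ≤ G * Real.exp (-(N:ℝ) * relent Q p) :=
        mul_le_mul_of_nonneg_right stepC (le_of_lt hexp)
    _ = C * p^k * (1-p)^b := stepB.symm
    _ ≤ binTail p k N := stepA
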